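/- Let A be a nonzero n × m real matrix of rank r, and let s ≤ r. Then there exists an n × s real matrix U with Uᵀ U = I_s such that r * ‖U Uᵀ A‖_F² ≥ s * ‖A‖_F²; i.e., the best rank-s column-space projection captures at least the fraction s/r of the squared Frobenius norm of A. -/

import Mathlib

open Matrix

private lemma trace_transpose_mul_self {p q : ℕ} (M : Matrix (Fin p) (Fin q) ℝ) :
    (Mᵀ * M).trace = ∑ j, ∑ i, (M i j)^2 := by
  simp [Matrix.trace, Matrix.diag, Matrix.mul_apply, Matrix.transpose_apply, sq]

private lemma exists_good_subset (r s : ℕ) (hs : s ≤ r) (c : Fin r → ℝ)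
    (hc : ∀ i, 0 ≤ c i) :
    ∃ T : Finset (Fin r), T.card = s ∧
      (s : ℝ) * ∑ i, c i ≤ (r : ℝ) * ∑ i ∈ T, c i := by
  obtain ⟨T, hT, hmax⟩ := Finset.exists_max_image
    ((Finset.univ : Finset (Fin r)).powersetCard s) (fun T => ∑ i ∈ T, c i)
    (Finset.powersetCard_nonempty.2 (by simpa using hs))
  rw [Finset.mem_powersetCard] at hT
  obtain ⟨-, hTcard⟩ := hT
  refine ⟨T, hTcard, ?_⟩
  have hTnonneg : (0:ℝ) ≤ ∑ i ∈ T, c i := Finset.sum_nonneg fun i _ => hc i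
  have key : ∀ i ∉ T, (s : ℝ) * c i ≤ ∑ j ∈ T, c j := by
    intro i hi
    rcases Nat.eq_zero_or_pos s with hs0 | hs0
    · simp [hs0, hTnonneg]
    · have hTne : T.Nonempty := Finset.card_pos.1 (hTcard ▸ hs0)
      obtain ⟨j₀, hj₀, hj₀min⟩ := Finset.exists_min_image T c hTne
      have hswap : c i ≤ c j₀ := by
        have hmem : insert i (T.erase j₀) ∈ (Finset.univ : Finset (Fin r)).powersetCard s := by
          rw [Finset.mem_powersetCard]
          refine ⟨Finset.subset_univ _, ?_⟩
          rw [Finset.card_insert_of_notMem (fun h => hi (Finset.mem_of_mem_erase h)),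
            Finset.card_erase_of_mem hj₀, hTcard]
          omega
        have hle := hmax _ hmem
        rw [Finset.sum_insert (fun h => hi (Finset.mem_of_mem_erase h)),
          Finset.sum_erase_eq_sub hj₀] at hle
        linarith
      calc (s:ℝ) * c i ≤ s * c j₀ :=
            mul_le_mul_of_nonneg_left hswap (by positivity)
        _ = ∑ _j ∈ T, c j₀ := by rw [Finset.sum_const, hTcard, nsmul_eq_mul]
        _ ≤ ∑ j ∈ T, c j := Finset.sum_le_sum fun j hj => hj₀min j hj
  have hsplit : ∑ i, c i = ∑ i ∈ T, c i + ∑ i ∈ Tᶜ, c i := (Finset.sum_add_sum_compl T c).symm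
  have hcompl : ∑ i ∈ Tᶜ, (s:ℝ) * c i ≤ ∑ _i ∈ Tᶜ, ∑ j ∈ T, c j :=
    Finset.sum_le_sum fun i hi => key i (Finset.mem_compl.1 hi)
  have hcardc : (Tᶜ : Finset (Fin r)).card = r - s := by
    rw [Finset.card_compl, hTcard, Fintype.card_fin]
  rw [Finset.sum_const, hcardc, ← Finset.mul_sum, nsmul_eq_mul,
    show ((r - s : ℕ) : ℝ) = (r : ℝ) - s by push_cast [Nat.cast_sub hs]; ring] at hcompl
  have e1 : (s:ℝ) * ∑ i, c i = s * ∑ i ∈ T, c i + s * ∑ i ∈ Tᶜ, c i := by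
    rw [hsplit]; ring
  linarith

theorem best_rank_s_projection_captures_fraction
    {n m : ℕ} (A : Matrix (Fin n) (Fin m) ℝ) (hA : A ≠ 0)
    (r : ℕ) (hr : A.rank = r) (s : ℕ) (hs : s ≤ r) :
    ∃ U : Matrix (Fin n) (Fin s) ℝ, Uᵀ * U = 1 ∧
      (s : ℝ) * (Aᵀ * A).trace ≤ (r : ℝ) * ((U * Uᵀ * A)ᵀ * (U * Uᵀ * A)).trace := by
  classical
  let eL : (Fin n → ℝ) ≃ₗ[ℝ] EuclideanSpace ℝ (Fin n) :=
    (WithLp.linearEquiv 2 ℝ (Fin n → ℝ)).symm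
  let S : Submodule ℝ (EuclideanSpace ℝ (Fin n)) :=
    (LinearMap.range A.mulVecLin).map (eL : (Fin n → ℝ) →ₗ[ℝ] EuclideanSpace ℝ (Fin n))
  have hfr : Module.finrank ℝ S = r := by
    rw [LinearEquiv.finrank_map_eq]
    exact hr
  let b : OrthonormalBasis (Fin r) ℝ S :=
    (stdOrthonormalBasis ℝ S).reindex (finCongr hfr)
  let u : Fin r → EuclideanSpace ℝ (Fin n) := fun i => (b i : EuclideanSpace ℝ (Fin n))
  have hu : ∀ i j, ∑ k : Fin n, u i k * u j k = if i = j then (1:ℝ) else 0 := by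
    intro i j
    have h1 := orthonormal_iff_ite.1 b.orthonormal j i
    rw [Submodule.coe_inner] at h1
    simp only [@eq_comm _ j i] at h1
    simpa [PiLp.inner_apply, RCLike.inner_apply, conj_trivial, u] using h1
  have parseval : ∀ x : EuclideanSpace ℝ (Fin n), x ∈ S →
      ∑ i : Fin r, (∑ k : Fin n, u i k * x k)^2 = ∑ k : Fin n, (x k)^2 := by
    intro x hx
    calc ∑ i : Fin r, (∑ k : Fin n, u i k * x k)^2
        = ∑ i : Fin r, (inner ℝ (⟨x, hx⟩ : S) (b i) : ℝ) * inner ℝ (b i) (⟨x, hx⟩ : S) := by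
          apply Finset.sum_congr rfl; intro i _
          rw [real_inner_comm (⟨x, hx⟩ : S) (b i), ← sq]
          congr 1
      _ = inner ℝ (⟨x, hx⟩ : S) (⟨x, hx⟩ : S) := b.sum_inner_mul_inner _ _
      _ = ∑ k : Fin n, (x k)^2 := by
          rw [Submodule.coe_inner]
          simp [PiLp.inner_apply, RCLike.inner_apply, conj_trivial, sq]
          rw [← sq, EuclideanSpace.norm_eq, Real.sq_sqrt (by positivity)]
          simp [Real.norm_eq_abs, sq]
  let colE : Fin m → EuclideanSpace ℝ (Fin n) := fun j => eL (A.mulVec (Pi.single j 1))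
  have hcolmem : ∀ j, colE j ∈ S := fun j =>
    Submodule.mem_map_of_mem (LinearMap.mem_range_self _ _)
  have hcolval : ∀ j k, colE j k = A k j := by
    intro j k
    show (A.mulVec (Pi.single j 1)) k = A k j
    simp [Matrix.mulVec, dotProduct, Pi.single_apply]
  let c : Fin r → ℝ := fun i => ∑ j, (∑ k : Fin n, u i k * A k j)^2
  have hcnn : ∀ i, 0 ≤ c i := fun i => Finset.sum_nonneg fun j _ => sq_nonneg _
  have htotal : (Aᵀ * A).trace = ∑ i, c i := by
    rw [trace_transpose_mul_self A,
      show (∑ i, c i) = ∑ j, ∑ i : Fin r, (∑ k : Fin n, u i k * A k j)^2 from Finset.sum_comm]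
    apply Finset.sum_congr rfl; intro j _
    have h := parseval (colE j) (hcolmem j)
    simp only [hcolval] at h
    exact h.symm
  obtain ⟨T, hTcard, hineq⟩ := exists_good_subset r s hs c hcnn
  let e : Fin s ≃ T := (T.orderIsoOfFin hTcard).toEquiv
  let U : Matrix (Fin n) (Fin s) ℝ := fun k l => u ((e l : Fin r)) k
  have hUorth : Uᵀ * U = 1 := by
    ext l l'
    rw [Matrix.mul_apply, Matrix.one_apply]
    have hiff : ((e l : Fin r) = (e l' : Fin r)) ↔ l = l' := by
      constructor
      · intro h; exact e.injective (Subtype.ext h)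
      · intro h; rw [h]
    rw [show ∑ k, Uᵀ l k * U k l' = ∑ k : Fin n, u (e l : Fin r) k * u (e l' : Fin r) k from rfl,
      hu, if_congr hiff rfl rfl]
  have hProj : (U * Uᵀ * A)ᵀ * (U * Uᵀ * A) = (Uᵀ * A)ᵀ * (Uᵀ * A) := by
    simp only [transpose_mul, transpose_transpose, Matrix.mul_assoc]
    rw [show Uᵀ * (U * (Uᵀ * A)) = (Uᵀ * U) * (Uᵀ * A) from (Matrix.mul_assoc _ _ _).symm,
      hUorth, Matrix.one_mul]
  have hRHS : ((U * Uᵀ * A)ᵀ * (U * Uᵀ * A)).trace = ∑ i ∈ T, c i := by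
    rw [hProj, trace_transpose_mul_self, Finset.sum_comm]
    have hentry : ∀ (l : Fin s) (j : Fin m), (Uᵀ * A) l j = ∑ k : Fin n, u (e l : Fin r) k * A k j := by
      intro l j; rw [Matrix.mul_apply]; rfl
    calc ∑ l : Fin s, ∑ j, ((Uᵀ * A) l j)^2 = ∑ l : Fin s, c (e l : Fin r) := by
          apply Finset.sum_congr rfl; intro l _
          apply Finset.sum_congr rfl; intro j _
          rw [hentry]
      _ = ∑ i ∈ T, c i := by
          rw [← Finset.sum_coe_sort T c]
          exact Fintype.sum_equiv e _ _ (fun l => rfl)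
  refine ⟨U, hUorth, ?_⟩
  rw [htotal, hRHS]
  exact hineq
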